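/- Let D_d(x,R₁) and D_d(y,R₂) be digital discs with x = (α,0), y = (γ,0), α < γ, γ − α ≤ R₁ + R₂, and R₁, R₂ ≥ 0. If C_d(x,R₁) ∩ C_d(y,R₂) ≠ ∅, then m(D_d(x,R₁), D_d(y,R₂)) = (R₁ − R₂)² + 2(R₁ + R₂ + 1)(γ − α) − (γ − α)². -/

import Mathlib

/-- L1 (taxicab) distance on the digital plane ℤ². -/
def dL1 (p q : ℤ × ℤ) : ℤ := |p.1 - q.1| + |p.2 - q.2|

/-- Digital circle with center `x` and radius `r`. -/
def digCircle (x : ℤ × ℤ) (r : ℤ) : Set (ℤ × ℤ) := {z | dL1 x z = r}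

/-- Digital disc with center `x` and radius `R`. -/
def digDisc (x : ℤ × ℤ) (R : ℤ) : Set (ℤ × ℤ) := {z | dL1 x z ≤ R}

/-- Jaccard-like metric: cardinality of the symmetric difference. -/
noncomputable def jm (A B : Set (ℤ × ℤ)) : ℕ := (symmDiff A B).ncard

/-- Finset model of the digital disc centered at `(c,0)`. -/
noncomputable def discF (c R : ℤ) : Finset (ℤ × ℤ) :=
  (Finset.Icc (c - R) (c + R) ×ˢ Finset.Icc (-R) R).filter
    (fun z => |z.1 - c| + |z.2| ≤ R)

lemma mem_discF {c R : ℤ} {z : ℤ × ℤ} : z ∈ discF c R ↔ |z.1 - c| + |z.2| ≤ R := by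
  simp only [discF, Finset.mem_filter, Finset.mem_product, Finset.mem_Icc,
    Int.abs_eq_natAbs]
  omega

lemma coe_discF (c R : ℤ) : (discF c R : Set (ℤ × ℤ)) = digDisc (c, 0) R := by
  ext z
  simp only [Finset.mem_coe, mem_discF, digDisc, dL1, Set.mem_setOf_eq,
    Int.abs_eq_natAbs]
  omega

lemma discF_eq_biUnion (c R : ℤ) :
    discF c R = (Finset.Icc (-R) R).biUnion
      (fun b => (Finset.Icc (c - (R - |b|)) (c + (R - |b|))).map
        ⟨fun a => (a, b), fun a a' h => (Prod.mk.injEq _ _ _ _ ▸ h : _ ∧ _).1⟩) := by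
  ext z
  simp only [mem_discF, Finset.mem_biUnion, Finset.mem_Icc, Finset.mem_map,
    Function.Embedding.coeFn_mk, Prod.ext_iff, Int.abs_eq_natAbs]
  constructor
  · intro h
    exact ⟨z.2, by omega, z.1, by omega, rfl, rfl⟩
  · rintro ⟨b, hb, a, ha, rfl, rfl⟩
    omega

lemma sum_abs_Icc (R : ℤ) (hR : 0 ≤ R) :
    (∑ b ∈ Finset.Icc (-R) R, |b|) = R ^ 2 + R := by
  refine Int.le_induction
    (motive := fun R _ => (∑ b ∈ Finset.Icc (-R) R, |b|) = R ^ 2 + R) ?_ ?_ R hR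
  · norm_num
  · intro R hR ih
    have hset : Finset.Icc (-(R + 1)) (R + 1)
        = insert (-(R + 1)) (insert (R + 1) (Finset.Icc (-R) R)) := by
      ext b; simp only [Finset.mem_Icc, Finset.mem_insert]; omega
    rw [hset, Finset.sum_insert, Finset.sum_insert, ih]
    · have h1 : |(-(R + 1))| = R + 1 := by rw [abs_neg]; exact abs_of_nonneg (by omega)
      have h2 : |R + 1| = R + 1 := abs_of_nonneg (by omega)
      rw [h1, h2]; ring
    · simp only [Finset.mem_Icc]; omega
    · simp only [Finset.mem_insert, Finset.mem_Icc]; omega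

lemma card_discF (c R : ℤ) (hR : 0 ≤ R) :
    ((discF c R).card : ℤ) = 2 * R ^ 2 + 2 * R + 1 := by
  rw [discF_eq_biUnion, Finset.card_biUnion]
  · push_cast
    have h1 : ∀ b ∈ Finset.Icc (-R) R,
        (((Finset.Icc (c - (R - |b|)) (c + (R - |b|))).map
          ⟨fun a => (a, b), fun a a' h => (Prod.mk.injEq _ _ _ _ ▸ h : _ ∧ _).1⟩).card : ℤ)
          = (2 * R + 1) - 2 * |b| := by
      intro b hb
      rw [Finset.card_map, Int.card_Icc]
      rw [Finset.mem_Icc] at hb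
      have hab : |b| ≤ R := abs_le.mpr hb
      rw [Int.toNat_of_nonneg (by omega)]
      ring
    rw [Finset.sum_congr rfl h1, Finset.sum_sub_distrib, Finset.sum_const,
      Int.card_Icc, ← Finset.mul_sum, sum_abs_Icc R hR, nsmul_eq_mul]
    rw [Int.toNat_of_nonneg (by omega)]
    push_cast
    ring
  · intro b hb b' hb' hne
    simp only [Finset.disjoint_left, Finset.mem_map, Function.Embedding.coeFn_mk]
    rintro z ⟨a, _, rfl⟩ ⟨a', _, h⟩
    exact hne (congrArg Prod.snd h).symm

theorem jm_discs_collinear (α γ R₁ R₂ : ℤ) (hαγ : α < γ)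
    (hR₁ : 0 ≤ R₁) (hR₂ : 0 ≤ R₂) (hhi : γ - α ≤ R₁ + R₂)
    (hcap : (digCircle (α, 0) R₁ ∩ digCircle (γ, 0) R₂).Nonempty) :
    (jm (digDisc (α, 0) R₁) (digDisc (γ, 0) R₂) : ℤ) =
      (R₁ - R₂) ^ 2 + 2 * (R₁ + R₂ + 1) * (γ - α) - (γ - α) ^ 2 := by
  obtain ⟨z, hz1, hz2⟩ := hcap
  simp only [digCircle, Set.mem_setOf_eq, dL1, Int.abs_eq_natAbs] at hz1 hz2
  -- parity and triangle facts
  have hpar : ∃ k : ℤ, 0 ≤ k ∧ k ≤ R₁ ∧ k ≤ R₂ ∧ R₁ + R₂ = (γ - α) + 2 * k := by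
    refine ⟨(R₁ + R₂ - (γ - α)) / 2, by omega, by omega, by omega, by omega⟩
  obtain ⟨k, hk0, hkR₁, hkR₂, hks⟩ := hpar
  set c : ℤ := α + R₁ - k with hc
  -- the intersection of the two discs is the disc of radius k at (c,0)
  have hinter : digDisc (α, 0) R₁ ∩ digDisc (γ, 0) R₂ = digDisc (c, 0) k := by
    ext w
    simp only [Set.mem_inter_iff, digDisc, Set.mem_setOf_eq, dL1,
      Int.abs_eq_natAbs]
    omega
  have hA := coe_discF α R₁
  have hB := coe_discF γ R₂
  have hC := coe_discF c k
  have hABfin : discF α R₁ ∩ discF γ R₂ = discF c k := by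
    apply Finset.coe_injective
    rw [Finset.coe_inter, hA, hB, hC, hinter]
  have hjm : (jm (digDisc (α, 0) R₁) (digDisc (γ, 0) R₂) : ℤ)
      = ((symmDiff (discF α R₁) (discF γ R₂)).card : ℤ) := by
    rw [jm, ← hA, ← hB, ← Finset.coe_symmDiff, Set.ncard_coe_finset]
  rw [hjm]
  have hcard : ((symmDiff (discF α R₁) (discF γ R₂)).card : ℤ)
      = ((discF α R₁).card : ℤ) + ((discF γ R₂).card : ℤ)
        - 2 * ((discF α R₁ ∩ discF γ R₂).card : ℤ) := by
    rw [symmDiff_def, Finset.sup_eq_union]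
    rw [Finset.card_union_of_disjoint (disjoint_sdiff_sdiff)]
    have h1 := Finset.card_sdiff_add_card_inter (discF α R₁) (discF γ R₂)
    have h2 := Finset.card_sdiff_add_card_inter (discF γ R₂) (discF α R₁)
    rw [Finset.inter_comm] at h2
    push_cast
    omega
  rw [hcard, hABfin, card_discF α R₁ hR₁, card_discF γ R₂ hR₂, card_discF c k hk0]
  have hγ : γ = α + R₁ + R₂ - 2 * k := by omega
  subst hγ
  ring
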